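/- arXiv:1005.3483 — 2 statements merged into one kernel-verified Lean document; each statement's English description precedes it below -/
import Mathlib

section
/- Fix H ∈ (1/2, 1) and T > 0, and let g : [0,T] → ℝ^d be measurable with Euclidean norm |g(t)| ≤ 1 for all t. Then ∫_0^T | ∫_s^T c_H (t/s)^{H−1/2} (t−s)^{H−3/2} g(t) dt |² ds ≤ T^{2H}. -/
open Set MeasureTheory intervalIntegral

/-- The Volterra kernel of fractional Brownian motion with Hurst parameter `H` and
normalizing constant `cH`:
`K_H(t,s) = c_H s^{1/2-H} ∫_s^t (u-s)^{H-3/2} u^{H-1/2} du` for `0 < s < t`, `0` otherwise. -/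
noncomputable def fbmKernel (cH H t s : ℝ) : ℝ :=
  if 0 < s ∧ s < t then
    cH * s ^ ((1:ℝ)/2 - H) * ∫ u in s..t, (u - s) ^ (H - 3/2) * u ^ (H - 1/2)
  else 0

lemma kernel_intIntegrable (cH H : ℝ) (hH : H ∈ Set.Ioo (1/2 : ℝ) 1) {s T : ℝ}
    (hs : 0 < s) (hsT : s < T) :
    IntervalIntegrable (fun t => cH * (t / s) ^ (H - 1/2) * (t - s) ^ (H - 3/2)) volume s T := by
  have h1 : IntervalIntegrable (fun t : ℝ => (t - s) ^ (H - 3/2)) volume s T := by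
    have := (intervalIntegral.intervalIntegrable_rpow' (a := 0) (b := T - s)
      (r := H - 3/2) (by linarith [hH.1])).comp_sub_right s
    simpa using this
  have h2 : ContinuousOn (fun t : ℝ => cH * (t / s) ^ (H - 1/2)) (Set.uIcc s T) := by
    apply continuousOn_const.mul
    apply ContinuousOn.rpow_const (continuousOn_id.div_const s)
    intro t _
    right; linarith [hH.1]
  have h3 := h1.continuousOn_mul h2
  refine h3.congr ?_
  intro t _
  ring

lemma kernel_nonneg (cH H : ℝ) (hcH : 0 < cH) {s t : ℝ} (hs : 0 ≤ s) (hst : s ≤ t) :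
    0 ≤ cH * (t / s) ^ (H - 1/2) * (t - s) ^ (H - 3/2) := by
  have h1 : 0 ≤ (t / s) ^ (H - 1/2) :=
    Real.rpow_nonneg (div_nonneg (hs.trans hst) hs) _
  have h2 : 0 ≤ (t - s) ^ (H - 3/2) := Real.rpow_nonneg (by linarith) _
  positivity

lemma integral_kernel_eq (cH H : ℝ) {s T : ℝ} (hs : 0 < s) (hsT : s < T) :
    (∫ t in s..T, cH * (t / s) ^ (H - 1/2) * (t - s) ^ (H - 3/2)) = fbmKernel cH H T s := by
  rw [fbmKernel, if_pos ⟨hs, hsT⟩, ← intervalIntegral.integral_const_mul]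
  apply intervalIntegral.integral_congr
  intro t ht
  rw [Set.uIcc_of_le hsT.le] at ht
  have ht0 : 0 < t := lt_of_lt_of_le hs ht.1
  have hsinv : s ^ ((1:ℝ)/2 - H) = (s ^ (H - 1/2))⁻¹ := by
    rw [← Real.rpow_neg hs.le]
    norm_num
  show cH * (t / s) ^ (H - 1/2) * (t - s) ^ (H - 3/2)
      = cH * s ^ ((1:ℝ)/2 - H) * ((t - s) ^ (H - 3/2) * t ^ (H - 1/2))
  rw [Real.div_rpow ht0.le hs.le, hsinv]
  have hspos : (0:ℝ) < s ^ (H - 1/2) := Real.rpow_pos_of_pos hs _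
  field_simp

lemma pointwise_bound (H : ℝ) (hH : H ∈ Set.Ioo (1/2 : ℝ) 1) (cH : ℝ) (hcH : 0 < cH)
    (d : ℕ) (g : ℝ → EuclideanSpace ℝ (Fin d)) (hgmeas : Measurable g)
    (hgbd : ∀ t, ‖g t‖ ≤ 1) {s T : ℝ} (hs : 0 < s) (hsT : s < T) :
    ‖∫ t in s..T, (cH * (t / s) ^ (H - 1/2) * (t - s) ^ (H - 3/2)) • g t‖
      ≤ fbmKernel cH H T s := by
  set k : ℝ → ℝ := fun t => cH * (t / s) ^ (H - 1/2) * (t - s) ^ (H - 3/2) with hk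
  have hki : IntervalIntegrable k volume s T := kernel_intIntegrable cH H hH hs hsT
  have hkmeas : Measurable k := by
    rw [hk]; fun_prop
  have hvi : IntervalIntegrable (fun t => k t • g t) volume s T := by
    rw [intervalIntegrable_iff] at hki ⊢
    refine MeasureTheory.Integrable.mono hki ((hkmeas.smul hgmeas).aestronglyMeasurable) ?_
    filter_upwards with t
    rw [norm_smul, Real.norm_eq_abs]
    calc ‖k t‖ * ‖g t‖ ≤ ‖k t‖ * 1 := by
          exact mul_le_mul_of_nonneg_left (hgbd t) (norm_nonneg _)
      _ = |k t| := by rw [mul_one, Real.norm_eq_abs]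
  calc ‖∫ t in s..T, k t • g t‖ ≤ ∫ t in s..T, ‖k t • g t‖ :=
        intervalIntegral.norm_integral_le_integral_norm hsT.le
    _ ≤ ∫ t in s..T, k t := by
        apply intervalIntegral.integral_mono_on hsT.le hvi.norm hki
        intro t ht
        have hknn : 0 ≤ k t := kernel_nonneg cH H hcH hs.le ht.1
        rw [norm_smul, Real.norm_eq_abs, abs_of_nonneg hknn]
        calc k t * ‖g t‖ ≤ k t * 1 := mul_le_mul_of_nonneg_left (hgbd t) hknn
          _ = k t := mul_one _
    _ = fbmKernel cH H T s := integral_kernel_eq cH H hs hsT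

/-- for `H ∈ (1/2,1)`, `T > 0`, `c_H` normalized so that the kernel reproduces
the fBm covariance, and any measurable `g : [0,T] → ℝ^d` with `|g| ≤ 1`, one has
`∫_0^T |∫_s^T c_H (t/s)^{H-1/2}(t-s)^{H-3/2} g(t) dt|² ds ≤ T^{2H}`. -/
theorem adjoint_kernel_L2_bound (H : ℝ) (hH : H ∈ Set.Ioo (1/2 : ℝ) 1)
    (cH : ℝ) (hcH : 0 < cH)
    (hnorm : ∀ s t : ℝ, 0 < s → 0 < t →
      (∫ u in (0:ℝ)..(min s t), fbmKernel cH H t u * fbmKernel cH H s u)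
        = (t ^ (2*H) + s ^ (2*H) - |t - s| ^ (2*H)) / 2)
    (d : ℕ) (T : ℝ) (hT : 0 < T)
    (g : ℝ → EuclideanSpace ℝ (Fin d)) (hgmeas : Measurable g) (hgbd : ∀ t, ‖g t‖ ≤ 1) :
    (∫ s in (0:ℝ)..T,
        ‖∫ t in s..T, (cH * (t / s) ^ (H - 1/2) * (t - s) ^ (H - 3/2)) • g t‖ ^ 2)
      ≤ T ^ (2*H) := by
  have hT2H : (0:ℝ) < T ^ (2*H) := Real.rpow_pos_of_pos hT _
  have hid : (∫ u in (0:ℝ)..T, fbmKernel cH H T u * fbmKernel cH H T u) = T ^ (2*H) := by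
    have h := hnorm T T hT hT
    rw [min_self, sub_self, abs_zero,
      Real.zero_rpow (by nlinarith [hH.1] : (2*H) ≠ 0)] at h
    rw [h]; ring
  rw [intervalIntegral.integral_of_le hT.le] at hid
  have hKint : IntegrableOn (fun u => fbmKernel cH H T u * fbmKernel cH H T u)
      (Set.Ioc 0 T) := by
    by_contra hc
    rw [MeasureTheory.integral_undef hc] at hid
    exact absurd hid.symm (ne_of_gt hT2H)
  rw [intervalIntegral.integral_of_le hT.le]
  calc (∫ s in Set.Ioc (0:ℝ) T,
        ‖∫ t in s..T, (cH * (t / s) ^ (H - 1/2) * (t - s) ^ (H - 3/2)) • g t‖ ^ 2)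
      ≤ ∫ s in Set.Ioc (0:ℝ) T, fbmKernel cH H T s * fbmKernel cH H T s := by
        apply integral_mono_of_nonneg
        · filter_upwards with s; positivity
        · exact hKint
        · filter_upwards [ae_restrict_mem measurableSet_Ioc] with s hsmem
          rcases eq_or_lt_of_le hsmem.2 with h | h
          · rw [h, intervalIntegral.integral_same, norm_zero]
            simpa using mul_self_nonneg (fbmKernel cH H T T)
          · have hb := pointwise_bound H hH cH hcH d g hgmeas hgbd hsmem.1 h
            have := mul_self_le_mul_self (norm_nonneg _) hb
            rw [pow_two]
            exact this
    _ = T ^ (2*H) := hid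
end

section
/- Fix H ∈ (1/2, 1) and T > 0, and let h ∈ L²([0,T]; ℝ^d). Define D(u) = ∫_0^u c_H (u/s)^{H−1/2} (u−s)^{H−3/2} h(s) ds for u ∈ (0,T). Then D ∈ L¹((0,T); ℝ^d) and ∫_0^t K_H(t,s) h(s) ds = ∫_0^t D(u) du for all t ∈ [0,T]. In particular, every Cameron–Martin path of fractional Brownian motion with Hurst parameter H > 1/2 is absolutely continuous, with almost-everywhere derivative D. -/
open Set MeasureTheory intervalIntegral

lemma fbmBaseInt {H : ℝ} (hH : H ∈ Set.Ioo (1/2 : ℝ) 1) (s T' : ℝ) :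
    IntervalIntegrable (fun u => (u - s) ^ (H - 3/2) * u ^ (H - 1/2)) volume s T' := by
  have h1 : IntervalIntegrable (fun u => (u - s) ^ (H - 3/2)) volume s T' := by
    have h2 := (intervalIntegrable_rpow' (a := 0) (b := T' - s)
      (r := H - 3/2) (by linarith [hH.1])).comp_sub_right s
    simpa using h2
  exact h1.mul_continuousOn
    ((Real.continuous_rpow_const (by linarith [hH.1])).continuousOn)

lemma fbmBaseVal {H : ℝ} (hH : H ∈ Set.Ioo (1/2 : ℝ) 1) {s T' : ℝ} (hs : s ≤ T') :
    ∫ u in Set.Ioo s T', (u - s) ^ (H - 3/2) = (T' - s) ^ (H - 1/2) / (H - 1/2) := by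
  rw [← MeasureTheory.integral_Ioc_eq_integral_Ioo, ← intervalIntegral.integral_of_le hs]
  rw [show (fun u : ℝ => (u - s) ^ (H - 3/2)) = fun u : ℝ => (fun x : ℝ => x ^ (H - 3/2)) (u - s) from rfl]
  rw [intervalIntegral.integral_comp_sub_right (fun x : ℝ => x ^ (H - 3/2)) s]
  rw [integral_rpow (Or.inl (by linarith [hH.1]))]
  rw [sub_self, Real.zero_rpow (by intro hc; nlinarith [hH.1] : H - 3/2 + 1 ≠ 0)]
  norm_num [show H - 3/2 + 1 = H - 1/2 by ring]

lemma fbmBaseIntOn {H : ℝ} (hH : H ∈ Set.Ioo (1/2 : ℝ) 1) {s T' : ℝ} (hs : s ≤ T') :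
    IntegrableOn (fun u => (u - s) ^ (H - 3/2) * u ^ (H - 1/2)) (Set.Ioo s T') volume :=
  (((intervalIntegrable_iff_integrableOn_Ioc_of_le hs).mp
    (fbmBaseInt hH s T'))).mono_set Set.Ioo_subset_Ioc_self

lemma fbmBaseIntOn' {H : ℝ} (hH : H ∈ Set.Ioo (1/2 : ℝ) 1) {s T' : ℝ} (hs : s ≤ T') :
    IntegrableOn (fun u => (u - s) ^ (H - 3/2)) (Set.Ioo s T') volume := by
  have h1 : IntervalIntegrable (fun u => (u - s) ^ (H - 3/2)) volume s T' := by
    have h2 := (intervalIntegrable_rpow' (a := 0) (b := T' - s)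
      (r := H - 3/2) (by linarith [hH.1])).comp_sub_right s
    simpa using h2
  exact ((intervalIntegrable_iff_integrableOn_Ioc_of_le hs).mp h1).mono_set
    Set.Ioo_subset_Ioc_self

lemma fbmBaseBound {H : ℝ} (hH : H ∈ Set.Ioo (1/2 : ℝ) 1) {T : ℝ} (hT : 0 < T)
    {s : ℝ} (hs : s ∈ Set.Ioo 0 T) :
    ∫ u in Set.Ioo s T, (u - s) ^ (H - 3/2) * u ^ (H - 1/2)
      ≤ T ^ (H - 1/2) / (H - 1/2) * T ^ (H - 1/2) := by
  have hb : (0:ℝ) ≤ H - 1/2 := by linarith [hH.1]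
  have h1 : ∫ u in Set.Ioo s T, (u - s) ^ (H - 3/2) * u ^ (H - 1/2)
      ≤ ∫ u in Set.Ioo s T, (u - s) ^ (H - 3/2) * T ^ (H - 1/2) := by
    refine setIntegral_mono_on (fbmBaseIntOn hH hs.2.le)
      ((fbmBaseIntOn' hH hs.2.le).mul_const _) measurableSet_Ioo (fun u hu => ?_)
    exact mul_le_mul_of_nonneg_left
      (Real.rpow_le_rpow (le_of_lt (lt_trans hs.1 hu.1)) hu.2.le hb)
      (Real.rpow_nonneg (by linarith [hu.1]) _)
  refine h1.trans ?_
  rw [MeasureTheory.integral_mul_const, fbmBaseVal hH hs.2.le]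
  have h2 : (T - s) ^ (H - 1/2) ≤ T ^ (H - 1/2) :=
    Real.rpow_le_rpow (by linarith [hs.2]) (by linarith [hs.1]) hb
  have h3 : (0:ℝ) < H - 1/2 := by linarith [hH.1]
  have h4 : (0:ℝ) ≤ T ^ (H - 1/2) := Real.rpow_nonneg hT.le _
  gcongr

lemma fbmRpowMemL2 {H : ℝ} (hH : H ∈ Set.Ioo (1/2 : ℝ) 1) {T : ℝ} (hT : 0 < T) :
    MemLp (fun s : ℝ => s ^ ((1:ℝ)/2 - H)) 2 (volume.restrict (Set.Ioo 0 T)) := by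
  have hm : AEStronglyMeasurable (fun s : ℝ => s ^ ((1:ℝ)/2 - H))
      (volume.restrict (Set.Ioo 0 T)) :=
    (measurable_id.pow measurable_const).aestronglyMeasurable
  rw [memLp_two_iff_integrable_sq hm]
  have hint : IntegrableOn (fun s : ℝ => s ^ (1 - 2*H)) (Set.Ioo 0 T) volume :=
    ((intervalIntegrable_iff_integrableOn_Ioc_of_le hT.le).mp
      (intervalIntegrable_rpow' (by linarith [hH.2]))).mono_set Set.Ioo_subset_Ioc_self
  refine hint.congr_fun (fun s hs => ?_) measurableSet_Ioo
  rw [sq, ← Real.rpow_add hs.1]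
  ring_nf

/-- Auxiliary two-variable integrand. -/
noncomputable def fbmG {d : ℕ} (cH H : ℝ) (h : ℝ → EuclideanSpace ℝ (Fin d)) (s u : ℝ) :
    EuclideanSpace ℝ (Fin d) :=
  if 0 < s ∧ s < u then
    ((cH * s ^ ((1:ℝ)/2 - H)) * ((u - s) ^ (H - 3/2) * u ^ (H - 1/2))) • h s
  else 0

lemma fbmG_eq_indicator_right {d : ℕ} (cH H : ℝ) (h : ℝ → EuclideanSpace ℝ (Fin d))
    {s : ℝ} (hs : 0 < s) :
    (fun u => fbmG cH H h s u) = (Set.Ioi s).indicator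
      (fun u => ((cH * s ^ ((1:ℝ)/2 - H)) * ((u - s) ^ (H - 3/2) * u ^ (H - 1/2))) • h s) := by
  funext u
  by_cases hu : s < u
  · simp [fbmG, hs, hu, Set.indicator_of_mem, Set.mem_Ioi]
  · simp [fbmG, hu, Set.indicator_of_notMem, Set.mem_Ioi]

lemma fbmG_eq_indicator_left {d : ℕ} (cH H : ℝ) (h : ℝ → EuclideanSpace ℝ (Fin d))
    (u : ℝ) :
    (fun s => fbmG cH H h s u) = (Set.Ioo 0 u).indicator
      (fun s => ((cH * s ^ ((1:ℝ)/2 - H)) * ((u - s) ^ (H - 3/2) * u ^ (H - 1/2))) • h s) := by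
  funext s
  by_cases hsu : 0 < s ∧ s < u
  · simp [fbmG, hsu, Set.indicator_of_mem, Set.mem_Ioo]
  · rw [Set.indicator_of_notMem (by simpa [Set.mem_Ioo] using hsu)]
    simp [fbmG, hsu]

lemma fbmD_eq {d : ℕ} {H : ℝ} (cH : ℝ) (h : ℝ → EuclideanSpace ℝ (Fin d))
    {u t' : ℝ} (hu : 0 < u) (hut : u ≤ t') :
    ∫ s in (0:ℝ)..u, (cH * (u / s) ^ (H - 1/2) * (u - s) ^ (H - 3/2)) • h s
      = ∫ s in Set.Ioo 0 t', fbmG cH H h s u ∂volume := by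
  rw [intervalIntegral.integral_of_le hu.le, MeasureTheory.integral_Ioc_eq_integral_Ioo]
  have hswap : ∫ s in Set.Ioo 0 t', fbmG cH H h s u ∂volume
      = ∫ s in Set.Ioo 0 u,
          ((cH * s ^ ((1:ℝ)/2 - H)) * ((u - s) ^ (H - 3/2) * u ^ (H - 1/2))) • h s := by
    rw [fbmG_eq_indicator_left cH H h u, setIntegral_indicator measurableSet_Ioo,
      Set.inter_eq_self_of_subset_right (Set.Ioo_subset_Ioo le_rfl hut)]
  rw [hswap]
  refine setIntegral_congr_fun measurableSet_Ioo (fun s hs => ?_)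
  congr 1
  have e2 : s ^ ((1:ℝ)/2 - H) = (s ^ (H - 1/2))⁻¹ := by
    rw [show (1:ℝ)/2 - H = -(H - 1/2) by ring, Real.rpow_neg hs.1.le]
  rw [Real.div_rpow hu.le hs.1.le, e2, div_eq_mul_inv]
  ring

lemma fbmK_eq {d : ℕ} {H : ℝ} (cH : ℝ) (h : ℝ → EuclideanSpace ℝ (Fin d))
    {s t : ℝ} (hs : 0 < s) (hst : s < t) :
    fbmKernel cH H t s • h s = ∫ u in Set.Ioo 0 t, fbmG cH H h s u ∂volume := by
  rw [fbmG_eq_indicator_right cH H h hs, setIntegral_indicator measurableSet_Ioi,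
    show Set.Ioo 0 t ∩ Set.Ioi s = Set.Ioo s t by
      ext x; simp only [Set.mem_inter_iff, Set.mem_Ioo, Set.mem_Ioi]
      exact ⟨fun ⟨h1, h2⟩ => ⟨h2, h1.2⟩, fun ⟨h1, h2⟩ => ⟨⟨hs.trans h1, h2⟩, h1⟩⟩,
    _root_.integral_smul_const, MeasureTheory.integral_const_mul]
  have : fbmKernel cH H t s
      = cH * s ^ ((1:ℝ)/2 - H) * ∫ u in s..t, (u - s) ^ (H - 3/2) * u ^ (H - 1/2) := by
    simp [fbmKernel, hs, hst]
  rw [this, intervalIntegral.integral_of_le hst.le,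
    MeasureTheory.integral_Ioc_eq_integral_Ioo, mul_assoc]

/-- for `H ∈ (1/2,1)`, `T > 0` and `h ∈ L²([0,T];ℝ^d)`, the function
`D(u) = ∫_0^u c_H (u/s)^{H-1/2} (u-s)^{H-3/2} h(s) ds` is in `L¹((0,T);ℝ^d)` and
`∫_0^t K_H(t,s) h(s) ds = ∫_0^t D(u) du` for all `t ∈ [0,T]`: every Cameron–Martin path of
fBm with `H > 1/2` is absolutely continuous with a.e. derivative `D`. -/
theorem cameronMartin_absolutelyContinuous (H : ℝ) (hH : H ∈ Set.Ioo (1/2 : ℝ) 1)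
    (cH : ℝ) (hcH : 0 < cH)
    (d : ℕ) (T : ℝ) (hT : 0 < T)
    (h : ℝ → EuclideanSpace ℝ (Fin d))
    (hL2 : MeasureTheory.MemLp h 2 (MeasureTheory.volume.restrict (Set.Ioc 0 T))) :
    MeasureTheory.IntegrableOn
      (fun u => ∫ s in (0:ℝ)..u, (cH * (u / s) ^ (H - 1/2) * (u - s) ^ (H - 3/2)) • h s)
      (Set.Ioo 0 T) ∧
    ∀ t ∈ Set.Icc (0:ℝ) T,
      (∫ s in (0:ℝ)..t, fbmKernel cH H t s • h s)
        = ∫ u in (0:ℝ)..t,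
            ∫ s in (0:ℝ)..u, (cH * (u / s) ^ (H - 1/2) * (u - s) ^ (H - 3/2)) • h s := by
  have hb0 : (0:ℝ) < H - 1/2 := by linarith [hH.1]
  set C : ℝ := T ^ (H - 1/2) / (H - 1/2) * T ^ (H - 1/2) with hC
  have hmh : AEStronglyMeasurable h (volume.restrict (Set.Ioo 0 T)) :=
    hL2.aestronglyMeasurable.mono_measure
      (Measure.restrict_mono Set.Ioo_subset_Ioc_self le_rfl)
  have hSmeas : MeasurableSet {p : ℝ × ℝ | 0 < p.1 ∧ p.1 < p.2} :=
    (measurableSet_lt measurable_const measurable_fst).inter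
      (measurableSet_lt measurable_fst measurable_snd)
  have hcm : Measurable (fun p : ℝ × ℝ =>
      (cH * p.1 ^ ((1:ℝ)/2 - H)) * ((p.2 - p.1) ^ (H - 3/2) * p.2 ^ (H - 1/2))) :=
    (measurable_const.mul (measurable_fst.pow measurable_const)).mul
      (((measurable_snd.sub measurable_fst).pow measurable_const).mul
        (measurable_snd.pow measurable_const))
  have hgm : AEStronglyMeasurable (Function.uncurry (fbmG cH H h))
      ((volume.restrict (Set.Ioo 0 T)).prod (volume.restrict (Set.Ioo 0 T))) := by
    have heq : Function.uncurry (fbmG cH H h)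
        = Set.indicator {p : ℝ × ℝ | 0 < p.1 ∧ p.1 < p.2}
          (fun p => ((cH * p.1 ^ ((1:ℝ)/2 - H))
            * ((p.2 - p.1) ^ (H - 3/2) * p.2 ^ (H - 1/2))) • h p.1) := by
      funext p
      by_cases hp : 0 < p.1 ∧ p.1 < p.2
      · rw [Set.indicator_of_mem (by simpa [Set.mem_setOf_eq] using hp)]
        simp [Function.uncurry, fbmG, hp]
      · rw [Set.indicator_of_notMem (by simpa [Set.mem_setOf_eq] using hp)]
        simp [Function.uncurry, fbmG, hp]
    rw [heq]
    exact (hcm.aestronglyMeasurable.smul hmh.comp_fst).indicator hSmeas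
  have hIooIoi : ∀ s : ℝ, 0 < s → ∀ t' : ℝ, Set.Ioi s ∩ Set.Ioo 0 t' = Set.Ioo s t' := by
    intro s hs t'
    ext x
    simp only [Set.mem_inter_iff, Set.mem_Ioo, Set.mem_Ioi]
    exact ⟨fun ⟨h1, h2⟩ => ⟨h1, h2.2⟩, fun ⟨h1, h2⟩ => ⟨h1, hs.trans h1, h2⟩⟩
  have hIu : ∀ s ∈ Set.Ioo (0:ℝ) T,
      Integrable (fun u => fbmG cH H h s u) (volume.restrict (Set.Ioo 0 T)) := by
    intro s hs
    rw [fbmG_eq_indicator_right cH H h hs.1,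
      integrable_indicator_iff measurableSet_Ioi, IntegrableOn,
      Measure.restrict_restrict measurableSet_Ioi, hIooIoi s hs.1 T]
    exact ((fbmBaseIntOn hH hs.2.le).const_mul _).smul_const (h s)
  have hnorm : ∀ s ∈ Set.Ioo (0:ℝ) T,
      ∫ u, ‖fbmG cH H h s u‖ ∂(volume.restrict (Set.Ioo 0 T))
        ≤ (cH * s ^ ((1:ℝ)/2 - H) * C) * ‖h s‖ := by
    intro s hs
    have hnm : (fun u => ‖fbmG cH H h s u‖) = (Set.Ioi s).indicator
        (fun u => ((cH * s ^ ((1:ℝ)/2 - H))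
          * ((u - s) ^ (H - 3/2) * u ^ (H - 1/2))) * ‖h s‖) := by
      funext u
      by_cases hu : s < u
      · rw [Set.indicator_of_mem (Set.mem_Ioi.mpr hu)]
        have hge : fbmG cH H h s u = ((cH * s ^ ((1:ℝ)/2 - H))
            * ((u - s) ^ (H - 3/2) * u ^ (H - 1/2))) • h s := by
          simp [fbmG, hs.1, hu]
        rw [hge, norm_smul, Real.norm_of_nonneg]
        exact mul_nonneg (mul_nonneg hcH.le (Real.rpow_nonneg hs.1.le _))
          (mul_nonneg (Real.rpow_nonneg (by linarith) _)
            (Real.rpow_nonneg (by linarith [hs.1]) _))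
      · rw [Set.indicator_of_notMem (by simpa using hu)]
        have hg0 : fbmG cH H h s u = 0 := by simp [fbmG, hu]
        rw [hg0, norm_zero]
    rw [hnm, setIntegral_indicator measurableSet_Ioi,
      show Set.Ioo (0:ℝ) T ∩ Set.Ioi s = Set.Ioo s T from by
        rw [Set.inter_comm]; exact hIooIoi s hs.1 T,
      MeasureTheory.integral_mul_const, MeasureTheory.integral_const_mul]
    have hI := fbmBaseBound hH hT hs
    have hs0 : (0:ℝ) ≤ cH * s ^ ((1:ℝ)/2 - H) :=
      mul_nonneg hcH.le (Real.rpow_nonneg hs.1.le _)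
    exact mul_le_mul_of_nonneg_right
      (mul_le_mul_of_nonneg_left hI hs0) (norm_nonneg _)
  have hφint : Integrable (fun s => (cH * s ^ ((1:ℝ)/2 - H) * C) * ‖h s‖)
      (volume.restrict (Set.Ioo 0 T)) := by
    have h2 : MemLp (fun s => ‖h s‖) 2 (volume.restrict (Set.Ioo 0 T)) :=
      hL2.norm.mono_measure (Measure.restrict_mono Set.Ioo_subset_Ioc_self le_rfl)
    have h1 : MemLp (fun s : ℝ => cH * s ^ ((1:ℝ)/2 - H) * C) 2
        (volume.restrict (Set.Ioo 0 T)) := by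
      have h1' := (fbmRpowMemL2 hH hT).const_mul (cH * C)
      have he : (fun s : ℝ => cH * C * s ^ ((1:ℝ)/2 - H))
          = fun s : ℝ => cH * s ^ ((1:ℝ)/2 - H) * C := by funext s; ring
      rwa [he] at h1'
    have h3 := h2.smul h1 (p := 2) (q := 2) (r := 1)
      (hpqr := ⟨by rw [inv_one]; exact ENNReal.inv_two_add_inv_two⟩)
    rw [memLp_one_iff_integrable] at h3
    exact h3.congr (Filter.Eventually.of_forall fun s => by
      simp [Pi.smul_apply', smul_eq_mul])
  have hcond2 : Integrable
      (fun s => ∫ u, ‖Function.uncurry (fbmG cH H h) (s, u)‖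
        ∂(volume.restrict (Set.Ioo 0 T))) (volume.restrict (Set.Ioo 0 T)) := by
    refine Integrable.mono' hφint hgm.norm.integral_prod_right' ?_
    refine (ae_restrict_iff' measurableSet_Ioo).mpr
      (Filter.Eventually.of_forall fun s hs => ?_)
    rw [Real.norm_of_nonneg (integral_nonneg fun u => norm_nonneg _)]
    exact hnorm s hs
  have hcond1 : ∀ᵐ s ∂(volume.restrict (Set.Ioo 0 T)),
      Integrable (fun u => Function.uncurry (fbmG cH H h) (s, u))
        (volume.restrict (Set.Ioo 0 T)) :=
    (ae_restrict_iff' measurableSet_Ioo).mpr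
      (Filter.Eventually.of_forall fun s hs => hIu s hs)
  have hInt : Integrable (Function.uncurry (fbmG cH H h))
      ((volume.restrict (Set.Ioo 0 T)).prod (volume.restrict (Set.Ioo 0 T))) :=
    (integrable_prod_iff hgm).mpr ⟨hcond1, hcond2⟩
  constructor
  · refine hInt.integral_prod_right.congr ?_
    refine (ae_restrict_iff' measurableSet_Ioo).mpr
      (Filter.Eventually.of_forall fun u hu => ?_)
    exact (fbmD_eq cH h hu.1 hu.2.le).symm
  · intro t ht
    rcases eq_or_lt_of_le ht.1 with h0 | h0
    · rw [← h0]
      simp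
    have hsub : Set.Ioo (0:ℝ) t ⊆ Set.Ioo 0 T := Set.Ioo_subset_Ioo le_rfl ht.2
    have hInt_t : Integrable (Function.uncurry (fbmG cH H h))
        ((volume.restrict (Set.Ioo 0 t)).prod (volume.restrict (Set.Ioo 0 t))) := by
      refine hInt.mono_measure ?_
      rw [Measure.prod_restrict, Measure.prod_restrict]
      exact Measure.restrict_mono (Set.prod_mono hsub hsub) le_rfl
    rw [intervalIntegral.integral_of_le ht.1, MeasureTheory.integral_Ioc_eq_integral_Ioo,
      setIntegral_congr_fun measurableSet_Ioo (fun s hs => fbmK_eq cH h hs.1 hs.2),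
      MeasureTheory.integral_integral_swap hInt_t,
      intervalIntegral.integral_of_le ht.1, MeasureTheory.integral_Ioc_eq_integral_Ioo]
    exact setIntegral_congr_fun measurableSet_Ioo
      (fun u hu => (fbmD_eq cH h hu.1 hu.2.le).symm)
end
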